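/- For every δ ∈ (0, 1/2), the function f(u) = h2(δ ⋆ h2⁻¹(u)) is twice differentiable on the open interval (0, 1) and its second derivative satisfies f''(u) > 0 for all u ∈ (0, 1); in particular f is strictly convex on (0, 1). -/

import Mathlib

open MeasureTheory

/-- Binary entropy function (base 2), with the convention `0 * log₂ 0 = 0`
(automatic since `Real.logb 2 0 = 0`). -/
noncomputable def h2 (p : ℝ) : ℝ :=
  -(p * Real.logb 2 p) - (1 - p) * Real.logb 2 (1 - p)

/-- Inverse of the binary entropy function: for `q ≥ 0`, the unique `r ∈ [0, 1/2]`
with `h2 r = q` (realized as the infimum of the solution set); `0` for `q < 0`. -/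
noncomputable def h2inv (q : ℝ) : ℝ :=
  if q < 0 then 0 else sInf {r : ℝ | 0 ≤ r ∧ r ≤ 1 / 2 ∧ h2 r = q}

/-- Binary convolution `a ⋆ b = a(1-b) + (1-a)b`. -/
def bconv (a b : ℝ) : ℝ := a * (1 - b) + (1 - a) * b


namespace MGL

open Real Set Filter

lemma log2_pos : (0:ℝ) < Real.log 2 := Real.log_pos (by norm_num)

lemma h2_eq (p : ℝ) : h2 p = Real.binEntropy p / Real.log 2 := by
  unfold h2 Real.binEntropy Real.logb
  rw [Real.log_inv, Real.log_inv]
  ring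

lemma h2_fun_eq : h2 = fun p => Real.binEntropy p / Real.log 2 := funext h2_eq

lemma h2_zero : h2 0 = 0 := by rw [h2_eq]; simp

lemma h2_half : h2 (1/2) = 1 := by
  rw [h2_eq, show (1:ℝ)/2 = 2⁻¹ by norm_num, Real.binEntropy_two_inv]
  exact div_self (ne_of_gt log2_pos)

lemma h2_strictMonoOn : StrictMonoOn h2 (Set.Icc 0 (1/2:ℝ)) := by
  intro a ha b hb hab
  rw [h2_eq, h2_eq, div_lt_div_iff_of_pos_right log2_pos]
  have h : (1:ℝ)/2 = 2⁻¹ := by norm_num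
  exact Real.binEntropy_strictMonoOn (by rw [← h]; exact ha) (by rw [← h]; exact hb) hab

lemma h2_monotoneOn : MonotoneOn h2 (Set.Icc 0 (1/2:ℝ)) := h2_strictMonoOn.monotoneOn

/-- `L` is `log 2` times the derivative of `h2`. -/
noncomputable def L (x : ℝ) : ℝ := Real.log (1-x) - Real.log x

lemma L_pos {x : ℝ} (hx : x ∈ Set.Ioo 0 (1/2:ℝ)) : 0 < L x := by
  have : Real.log x < Real.log (1-x) := Real.log_lt_log hx.1 (by linarith [hx.2])
  simpa [L, sub_pos] using this

lemma hasDerivAt_h2 {p : ℝ} (h0 : p ≠ 0) (h1 : p ≠ 1) :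
    HasDerivAt h2 (L p / Real.log 2) p := by
  rw [h2_fun_eq]
  exact (Real.hasDerivAt_binEntropy h0 h1).div_const _

lemma h2inv_exists {u : ℝ} (hu : u ∈ Set.Ioo (0:ℝ) 1) :
    ∃ r ∈ Set.Ioo (0:ℝ) (1/2), h2 r = u ∧ h2inv u = r := by
  have hcont : ContinuousOn h2 (Set.Icc 0 (1/2:ℝ)) := by
    rw [h2_fun_eq]
    exact (Real.binEntropy_continuous.div_const _).continuousOn
  have hIV := intermediate_value_Ioo (by norm_num : (0:ℝ) ≤ 1/2) hcont
  rw [h2_zero, h2_half] at hIV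
  obtain ⟨r, hr, hru⟩ := hIV hu
  refine ⟨r, hr, hru, ?_⟩
  have hset : {r' : ℝ | 0 ≤ r' ∧ r' ≤ 1 / 2 ∧ h2 r' = u} = {r} := by
    ext r'
    simp only [Set.mem_setOf_eq, Set.mem_singleton_iff]
    constructor
    · rintro ⟨h1, h2', h3⟩
      exact h2_strictMonoOn.injOn ⟨h1, h2'⟩ ⟨hr.1.le, hr.2.le⟩ (h3.trans hru.symm)
    · rintro rfl
      exact ⟨hr.1.le, hr.2.le, hru⟩
  rw [h2inv, if_neg (not_lt.2 hu.1.le), hset, csInf_singleton]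

lemma h2inv_mem {u : ℝ} (hu : u ∈ Set.Ioo (0:ℝ) 1) : h2inv u ∈ Set.Ioo (0:ℝ) (1/2) := by
  obtain ⟨r, hr, _, hinv⟩ := h2inv_exists hu
  rw [hinv]; exact hr

lemma h2_h2inv {u : ℝ} (hu : u ∈ Set.Ioo (0:ℝ) 1) : h2 (h2inv u) = u := by
  obtain ⟨r, _, hru, hinv⟩ := h2inv_exists hu
  rw [hinv]; exact hru

lemma continuousAt_h2inv {u : ℝ} (hu : u ∈ Set.Ioo (0:ℝ) 1) : ContinuousAt h2inv u := by
  obtain ⟨hr0, hr1⟩ := h2inv_mem hu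
  rw [ContinuousAt]
  apply tendsto_order.2
  constructor
  · intro a ha
    set b := max a (h2inv u / 2) with hbdef
    have hb0 : 0 < b := lt_max_of_lt_right (by linarith)
    have hblt : b < h2inv u := max_lt ha (by linarith)
    have hbhalf : b < 1/2 := hblt.trans hr1
    have h1 : h2 b < u := by
      have := h2_strictMonoOn ⟨hb0.le, hbhalf.le⟩ ⟨hr0.le, hr1.le⟩ hblt
      rwa [h2_h2inv hu] at this
    filter_upwards [eventually_gt_nhds h1, eventually_gt_nhds hu.1, eventually_lt_nhds hu.2]
      with y hy1 hy0 hy2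
    by_contra hcon
    push_neg at hcon
    have hmem := h2inv_mem (⟨hy0, hy2⟩ : y ∈ Set.Ioo (0:ℝ) 1)
    have : h2 (h2inv y) ≤ h2 b :=
      h2_monotoneOn ⟨hmem.1.le, hmem.2.le⟩ ⟨hb0.le, hbhalf.le⟩ (hcon.trans (le_max_left _ _))
    rw [h2_h2inv ⟨hy0, hy2⟩] at this
    linarith
  · intro a ha
    set b := min a ((h2inv u + 1/2)/2) with hbdef
    have hblt : h2inv u < b := lt_min ha (by linarith)
    have hb0 : 0 < b := hr0.trans hblt
    have hbhalf : b < 1/2 := lt_of_le_of_lt (min_le_right _ _) (by linarith)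
    have h1 : u < h2 b := by
      have := h2_strictMonoOn ⟨hr0.le, hr1.le⟩ ⟨hb0.le, hbhalf.le⟩ hblt
      rwa [h2_h2inv hu] at this
    filter_upwards [eventually_lt_nhds h1, eventually_gt_nhds hu.1, eventually_lt_nhds hu.2]
      with y hy1 hy0 hy2
    by_contra hcon
    push_neg at hcon
    have hmem := h2inv_mem (⟨hy0, hy2⟩ : y ∈ Set.Ioo (0:ℝ) 1)
    have : h2 b ≤ h2 (h2inv y) :=
      h2_monotoneOn ⟨hb0.le, hbhalf.le⟩ ⟨hmem.1.le, hmem.2.le⟩ ((min_le_left _ _).trans hcon)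
    rw [h2_h2inv ⟨hy0, hy2⟩] at this
    linarith

lemma hasDerivAt_h2inv {u : ℝ} (hu : u ∈ Set.Ioo (0:ℝ) 1) :
    HasDerivAt h2inv (Real.log 2 / L (h2inv u)) u := by
  obtain ⟨hr0, hr1⟩ := h2inv_mem hu
  have hL : 0 < L (h2inv u) := L_pos (h2inv_mem hu)
  have hfg : ∀ᶠ y in nhds u, h2 (h2inv y) = y := by
    filter_upwards [eventually_gt_nhds hu.1, eventually_lt_nhds hu.2] with y h1 h2
    exact h2_h2inv ⟨h1, h2⟩
  have key := HasDerivAt.of_local_left_inverse (continuousAt_h2inv hu)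
    (hasDerivAt_h2 (ne_of_gt hr0) (by linarith : h2inv u ≠ 1))
    (div_ne_zero hL.ne' log2_pos.ne') hfg
  simpa [inv_div] using key

noncomputable def M (t : ℝ) : ℝ := -(1-t)⁻¹ - t⁻¹
noncomputable def g (x : ℝ) : ℝ := x * (1-x) * L x
noncomputable def gd (x : ℝ) : ℝ := (1-2*x) * L x - 1

lemma M_neg {t : ℝ} (ht : t ∈ Set.Ioo (0:ℝ) 1) : M t < 0 := by
  have h1 : 0 < (1-t)⁻¹ := inv_pos.2 (by linarith [ht.2])
  have h2 : 0 < t⁻¹ := inv_pos.2 ht.1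
  unfold M; linarith

lemma hasDerivAt_L {t : ℝ} (h0 : t ≠ 0) (h1 : t ≠ 1) : HasDerivAt L (M t) t := by
  have hlog1 : HasDerivAt (fun t : ℝ => Real.log (1-t)) (-(1-t)⁻¹) t := by
    have h := (Real.hasDerivAt_log (sub_ne_zero.2 (Ne.symm h1))).comp t
      ((hasDerivAt_id t).const_sub 1)
    exact h.congr_deriv (by ring)
  exact hlog1.sub (Real.hasDerivAt_log h0)

lemma hasDerivAt_g {x : ℝ} (hx : x ∈ Set.Ioo (0:ℝ) 1) : HasDerivAt g (gd x) x := by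
  have h1 : HasDerivAt (fun x : ℝ => x * (1-x)) (1-2*x) x := by
    have := (hasDerivAt_id x).mul ((hasDerivAt_id x).const_sub 1)
    simp only [id_eq] at this
    exact this.congr_deriv (by ring)
  have h2 := h1.mul (hasDerivAt_L (ne_of_gt hx.1) (ne_of_lt hx.2))
  refine h2.congr_deriv (Eq.symm ?_)
  have hx0 : x ≠ 0 := ne_of_gt hx.1
  have hx1 : (1:ℝ) - x ≠ 0 := by have := hx.2; intro h; apply absurd this; linarith [sub_eq_zero.1 h]
  unfold gd M
  field_simp
  ring

lemma hasDerivAt_gd {x : ℝ} (hx : x ∈ Set.Ioo (0:ℝ) 1) :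
    HasDerivAt gd (-2 * L x + (1-2*x) * M x) x := by
  have h1 : HasDerivAt (fun x : ℝ => 1 - 2*x) (-2) x := by
    have := ((hasDerivAt_id x).const_mul 2).const_sub 1
    exact this.congr_deriv (by norm_num)
  have := (h1.mul (hasDerivAt_L (ne_of_gt hx.1) (ne_of_lt hx.2))).sub_const 1
  exact this.congr_deriv (by ring)

lemma gd_strictAntiOn : StrictAntiOn gd (Set.Ioo (0:ℝ) (1/2)) := by
  apply strictAntiOn_of_deriv_neg (convex_Ioo _ _)
  · intro x hx
    have hx' : x ∈ Set.Ioo (0:ℝ) 1 := ⟨hx.1, by linarith [hx.2]⟩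
    exact (hasDerivAt_gd hx').continuousAt.continuousWithinAt
  · intro x hx
    rw [interior_Ioo] at hx
    have hx' : x ∈ Set.Ioo (0:ℝ) 1 := ⟨hx.1, by linarith [hx.2]⟩
    rw [(hasDerivAt_gd hx').deriv]
    have h1 : 0 < L x := L_pos hx
    have h2 : M x < 0 := M_neg hx'
    have h3 : 0 < 1 - 2*x := by linarith [hx.2]
    nlinarith

lemma sigma_mem {δ x : ℝ} (hδ0 : 0 < δ) (hδ1 : δ < 1/2) (hx : x ∈ Set.Ioo (0:ℝ) (1/2)) :
    δ + (1-2*δ)*x ∈ Set.Ioo (0:ℝ) (1/2) ∧ x < δ + (1-2*δ)*x := by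
  have h1 : 0 < 1 - 2*δ := by linarith
  constructor
  · constructor
    · nlinarith [hx.1]
    · nlinarith [hx.2]
  · nlinarith [hx.2]

lemma key_ineq {δ r : ℝ} (hδ0 : 0 < δ) (hδ1 : δ < 1/2) (hr : r ∈ Set.Ioo (0:ℝ) (1/2)) :
    (1-2*δ) * g r < g (δ + (1-2*δ)*r) := by
  have hc : 0 < 1 - 2*δ := by linarith
  set G : ℝ → ℝ := fun x => g (δ + (1-2*δ)*x) - (1-2*δ) * g x with hG
  have hmemIoo : ∀ x ∈ Set.Icc r (1/2:ℝ), x ≠ 1/2 → x ∈ Set.Ioo (0:ℝ) (1/2) :=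
    fun x hx hne => ⟨lt_of_lt_of_le hr.1 hx.1, lt_of_le_of_ne hx.2 hne⟩
  have hD : ∀ x ∈ Set.Icc r (1/2:ℝ),
      HasDerivAt G ((1-2*δ) * gd (δ + (1-2*δ)*x) - (1-2*δ) * gd x) x := by
    intro x hx
    have hx1 : 0 < x := lt_of_lt_of_le hr.1 hx.1
    have hxI : x ∈ Set.Ioo (0:ℝ) 1 := ⟨hx1, by linarith [hx.2]⟩
    have hs1 : δ + (1-2*δ)*x ∈ Set.Ioo (0:ℝ) 1 := by
      constructor
      · nlinarith
      · nlinarith [hx.2]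
    have hinner : HasDerivAt (fun x : ℝ => δ + (1-2*δ)*x) (1-2*δ) x := by
      have := ((hasDerivAt_id x).const_mul (1-2*δ)).const_add δ
      simpa using this
    have ha := (hasDerivAt_g hs1).comp x hinner
    have hb := (hasDerivAt_g hxI).const_mul (1-2*δ)
    have := ha.sub hb
    refine this.congr_deriv (Eq.symm ?_)
    ring
  have hanti : StrictAntiOn G (Set.Icc r (1/2:ℝ)) := by
    apply strictAntiOn_of_deriv_neg (convex_Icc _ _)
    · exact fun x hx => (hD x hx).continuousAt.continuousWithinAt
    · intro x hx
      rw [interior_Icc] at hx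
      have hxI : x ∈ Set.Ioo (0:ℝ) (1/2) := ⟨lt_of_lt_of_le hr.1 hx.1.le, hx.2⟩
      rw [(hD x ⟨hx.1.le, hx.2.le⟩).deriv]
      obtain ⟨hsmem, hlt⟩ := sigma_mem hδ0 hδ1 hxI
      have := gd_strictAntiOn hxI hsmem hlt
      nlinarith
  have h12 : G (1/2) = 0 := by
    have hs : δ + (1-2*δ)*(1/2:ℝ) = 1/2 := by ring
    simp only [hG, hs]
    have : g (1/2:ℝ) = 0 := by unfold g L; norm_num
    rw [this]; ring
  have := hanti ⟨le_refl r, hr.2.le⟩ ⟨hr.2.le, le_refl _⟩ hr.2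
  rw [h12] at this
  simp only [hG] at this
  linarith


/-- First derivative of `u ↦ h2 (δ + (1-2δ) h2inv u)`. -/
noncomputable def F1 (δ u : ℝ) : ℝ := (1-2*δ) * (L (δ + (1-2*δ) * h2inv u) / L (h2inv u))

/-- Second derivative value. -/
noncomputable def D2 (δ t : ℝ) : ℝ :=
  (1-2*δ) * Real.log 2 * ((1-2*δ) * M (δ + (1-2*δ)*t) * L t - L (δ + (1-2*δ)*t) * M t) / (L t)^3

lemma MK_identity {s t c : ℝ} (hs0 : 0 < s) (hs1 : s < 1) (ht0 : 0 < t) (ht1 : t < 1) :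
    c * M s * L t - L s * M t
      = (s*(1-s)*L s - c*(t*(1-t)*L t)) / (t*(1-t)*(s*(1-s))) := by
  have h1 : (1:ℝ) - s ≠ 0 := by linarith
  have h2 : (1:ℝ) - t ≠ 0 := by linarith
  unfold M
  field_simp
  ring

lemma hasDerivAt_f {δ : ℝ} (hδ0 : 0 < δ) (hδ1 : δ < 1/2) {u : ℝ} (hu : u ∈ Set.Ioo (0:ℝ) 1) :
    HasDerivAt (fun u => h2 (δ + (1-2*δ) * h2inv u)) (F1 δ u) u := by
  have hr := h2inv_mem hu
  obtain ⟨hs, _⟩ := sigma_mem hδ0 hδ1 hr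
  have hL : 0 < L (h2inv u) := L_pos hr
  have hinner : HasDerivAt (fun y => δ + (1-2*δ) * h2inv y)
      ((1-2*δ) * (Real.log 2 / L (h2inv u))) u :=
    ((hasDerivAt_h2inv hu).const_mul (1-2*δ)).const_add δ
  have houter := hasDerivAt_h2 (ne_of_gt hs.1) (by linarith [hs.2] : δ + (1-2*δ)*h2inv u ≠ 1)
  have := houter.comp u hinner
  refine this.congr_deriv (Eq.symm ?_)
  unfold F1
  field_simp

lemma hasDerivAt_F1 {δ : ℝ} (hδ0 : 0 < δ) (hδ1 : δ < 1/2) {u : ℝ} (hu : u ∈ Set.Ioo (0:ℝ) 1) :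
    HasDerivAt (F1 δ) (D2 δ (h2inv u)) u := by
  have hr := h2inv_mem hu
  obtain ⟨hs, _⟩ := sigma_mem hδ0 hδ1 hr
  have hL : 0 < L (h2inv u) := L_pos hr
  have hrd := hasDerivAt_h2inv hu
  have hinner : HasDerivAt (fun y => δ + (1-2*δ) * h2inv y)
      ((1-2*δ) * (Real.log 2 / L (h2inv u))) u :=
    (hrd.const_mul (1-2*δ)).const_add δ
  have ha : HasDerivAt (fun y => L (δ + (1-2*δ) * h2inv y))
      (M (δ + (1-2*δ) * h2inv u) * ((1-2*δ) * (Real.log 2 / L (h2inv u)))) u :=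
    by have := (hasDerivAt_L (ne_of_gt hs.1) (by linarith [hs.2] : δ + (1-2*δ) * h2inv u ≠ 1)).comp u hinner; exact this
  have hb : HasDerivAt (fun y => L (h2inv y))
      (M (h2inv u) * (Real.log 2 / L (h2inv u))) u :=
    (hasDerivAt_L (ne_of_gt hr.1) (by linarith [hr.2])).comp u hrd
  have hdiv := (ha.div hb hL.ne').const_mul (1-2*δ)
  refine hdiv.congr_deriv (Eq.symm ?_)
  unfold D2
  field_simp

lemma D2_pos {δ : ℝ} (hδ0 : 0 < δ) (hδ1 : δ < 1/2) {t : ℝ} (ht : t ∈ Set.Ioo (0:ℝ) (1/2)) : 0 < D2 δ t := by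
  obtain ⟨hs, _⟩ := sigma_mem hδ0 hδ1 ht
  have hc : 0 < 1 - 2*δ := by linarith
  have hLt : 0 < L t := L_pos ht
  have hLs : 0 < L (δ + (1-2*δ)*t) := L_pos hs
  set s := δ + (1-2*δ)*t with hsdef
  have ht0 : (0:ℝ) < t := ht.1
  have ht1 : t < 1 := by linarith [ht.2]
  have hs0 : (0:ℝ) < s := hs.1
  have hs1 : s < 1 := by linarith [hs.2]
  have hK : (1-2*δ) * M s * L t - L s * M t
      = (s*(1-s)*L s - (1-2*δ)*(t*(1-t)*L t)) / (t*(1-t)*(s*(1-s))) :=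
    MK_identity hs0 hs1 ht0 ht1
  have hnum : 0 < s*(1-s)*L s - (1-2*δ)*(t*(1-t)*L t) := by
    have := key_ineq hδ0 hδ1 ht
    unfold g at this
    rw [← hsdef] at this
    linarith
  have hden : 0 < t*(1-t)*(s*(1-s)) :=
    mul_pos (mul_pos ht0 (by linarith)) (mul_pos hs0 (by linarith))
  have hKpos : 0 < (1-2*δ) * M s * L t - L s * M t := by
    rw [hK]; exact div_pos hnum hden
  unfold D2
  rw [← hsdef]
  apply div_pos
  · exact mul_pos (mul_pos hc log2_pos) hKpos
  · exact pow_pos hLt 3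


end MGL

open MGL in
theorem stmt1 (δ : ℝ) (hδ : δ ∈ Set.Ioo (0 : ℝ) (1 / 2)) :
    (∀ u ∈ Set.Ioo (0 : ℝ) 1,
      DifferentiableAt ℝ (fun u => h2 (bconv δ (h2inv u))) u ∧
      DifferentiableAt ℝ (deriv (fun u => h2 (bconv δ (h2inv u)))) u ∧
      0 < deriv (deriv (fun u => h2 (bconv δ (h2inv u)))) u) ∧
    StrictConvexOn ℝ (Set.Ioo (0 : ℝ) 1) (fun u => h2 (bconv δ (h2inv u))) := by
  obtain ⟨hδ0, hδ1⟩ := hδ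
  have hfun : (fun u => h2 (bconv δ (h2inv u))) = fun u => h2 (δ + (1-2*δ) * h2inv u) := by
    funext x; congr 1; unfold bconv; ring
  rw [hfun]
  have hderiv : ∀ u ∈ Set.Ioo (0:ℝ) 1,
      deriv (fun u => h2 (δ + (1-2*δ) * h2inv u)) u = F1 δ u :=
    fun u hu => (hasDerivAt_f hδ0 hδ1 hu).deriv
  have hderiv2 : ∀ u ∈ Set.Ioo (0:ℝ) 1,
      deriv (deriv (fun u => h2 (δ + (1-2*δ) * h2inv u))) u = D2 δ (h2inv u) := by
    intro u hu
    have hEv : deriv (fun u => h2 (δ + (1-2*δ) * h2inv u)) =ᶠ[nhds u] F1 δ := by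
      filter_upwards [Ioo_mem_nhds hu.1 hu.2] with y hy using hderiv y hy
    rw [hEv.deriv_eq]
    exact (hasDerivAt_F1 hδ0 hδ1 hu).deriv
  have hmain : ∀ u ∈ Set.Ioo (0:ℝ) 1,
      DifferentiableAt ℝ (fun u => h2 (δ + (1-2*δ) * h2inv u)) u ∧
      DifferentiableAt ℝ (deriv (fun u => h2 (δ + (1-2*δ) * h2inv u))) u ∧
      0 < deriv (deriv (fun u => h2 (δ + (1-2*δ) * h2inv u))) u := by
    intro u hu
    refine ⟨(hasDerivAt_f hδ0 hδ1 hu).differentiableAt, ?_, ?_⟩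
    · have hEv : deriv (fun u => h2 (δ + (1-2*δ) * h2inv u)) =ᶠ[nhds u] F1 δ := by
        filter_upwards [Ioo_mem_nhds hu.1 hu.2] with y hy using hderiv y hy
      exact (hasDerivAt_F1 hδ0 hδ1 hu).differentiableAt.congr_of_eventuallyEq hEv
    · rw [hderiv2 u hu]
      exact D2_pos hδ0 hδ1 (h2inv_mem hu)
  refine ⟨hmain, ?_⟩
  apply strictConvexOn_of_deriv2_pos (convex_Ioo _ _)
  · exact fun x hx => (hasDerivAt_f hδ0 hδ1 hx).differentiableAt.continuousAt.continuousWithinAt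
  · intro x hx
    rw [interior_Ioo] at hx
    have : deriv^[2] (fun u => h2 (δ + (1-2*δ) * h2inv u))
        = deriv (deriv (fun u => h2 (δ + (1-2*δ) * h2inv u))) := rfl
    rw [this, hderiv2 x hx]
    exact D2_pos hδ0 hδ1 (h2inv_mem hx)
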